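/- arXiv:2001.10491 — 2 statements merged into one kernel-verified Lean document; each statement's English description precedes it below -/
import Mathlib

section
/- Let K be a field and let R be a local K-algebra with maximal ideal m. Suppose x_1,…,x_d ∈ R and K-linear derivations ∂_1,…,∂_d : R → R satisfy: ∂_i(x_i) is a unit of R for every i, and ∂_i(x_j) ∈ m whenever i ≠ j. Then there exist K-linear derivations δ_1,…,δ_d : R → R, each an R-linear combination of ∂_1,…,∂_d, such that δ_t(x_j) = 1 if t = j and δ_t(x_j) = 0 if t ≠ j. -/
/-- Let `K` be a field and `R` a local `K`-algebra with maximal ideal `m`.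
If `x_1,…,x_d ∈ R` and `K`-linear derivations `D_1,…,D_d : R → R` satisfy that `D_i (x_i)` is a
unit for every `i` and `D_i (x_j) ∈ m` for `i ≠ j`, then there are `K`-linear derivations
`δ_1,…,δ_d`, each an `R`-linear combination of the `D_i`, with `δ_t (x_j) = δₜⱼ`. -/
theorem exists_dual_derivations
    (K : Type*) [Field K] (R : Type*) [CommRing R] [IsLocalRing R] [Algebra K R]
    (d : ℕ) (x : Fin d → R) (D : Fin d → Derivation K R R)
    (hdiag : ∀ i, IsUnit (D i (x i)))
    (hoff : ∀ i j, i ≠ j → D i (x j) ∈ IsLocalRing.maximalIdeal R) :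
    ∃ δ : Fin d → Derivation K R R,
      (∀ t, ∃ c : Fin d → R, δ t = ∑ i : Fin d, c i • D i) ∧
      (∀ t j, δ t (x j) = if t = j then 1 else 0) := by
  classical
  set A : Matrix (Fin d) (Fin d) R := fun i j => D i (x j) with hA
  -- det A is a unit
  have hdet : IsUnit A.det := by
    rw [Matrix.det_apply]
    have hsplit : ∑ σ : Equiv.Perm (Fin d), Equiv.Perm.sign σ • ∏ i, A (σ i) i
        = (∏ i, A i i) + ∑ σ ∈ Finset.univ.filter (· ≠ 1),
            Equiv.Perm.sign σ • ∏ i, A (σ i) i := by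
      rw [← Finset.sum_filter_add_sum_filter_not Finset.univ (· = 1)]
      congr 1
      · rw [Finset.sum_filter]
        simp
    rw [hsplit]
    have hunit : IsUnit (∏ i, A i i) := by
      exact Finset.prod_induction _ IsUnit (fun a b => IsUnit.mul) isUnit_one
        fun i _ => hdiag i
    have hmem : (∑ σ ∈ Finset.univ.filter (· ≠ 1),
        Equiv.Perm.sign σ • ∏ i, A (σ i) i) ∈ IsLocalRing.maximalIdeal R := by
      apply Ideal.sum_mem
      intro σ hσ
      simp only [Finset.mem_filter] at hσ
      obtain ⟨i, hi⟩ : ∃ i, σ i ≠ i := by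
        by_contra h
        push_neg at h
        exact hσ.2 (Equiv.ext h)
      have hterm : (∏ i, A (σ i) i) ∈ IsLocalRing.maximalIdeal R := by
        rw [← Finset.prod_erase_mul _ _ (Finset.mem_univ i)]
        exact Ideal.mul_mem_left _ _ (hoff (σ i) i hi)
      rcases Int.units_eq_one_or (Equiv.Perm.sign σ) with h | h <;> rw [h] <;> simpa using hterm
    rw [← IsLocalRing.notMem_maximalIdeal] at hunit ⊢
    intro h
    have := Ideal.sub_mem _ h hmem
    simp at this
    exact hunit (by simpa using this)
  -- inverse matrix
  set B := A⁻¹ with hB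
  have hBA : B * A = 1 := Matrix.nonsing_inv_mul A hdet
  refine ⟨fun t => ∑ i : Fin d, B t i • D i, fun t => ⟨B t, rfl⟩, fun t j => ?_⟩
  have : (∑ i : Fin d, B t i • D i) (x j) = ∑ i : Fin d, B t i * A i j := by
    induction (Finset.univ : Finset (Fin d)) using Finset.induction with
    | empty => simp
    | insert a s h ih => simp [Finset.sum_insert h, ih, smul_eq_mul, hA]
  rw [this]
  have := congrFun (congrFun hBA t) j
  rw [Matrix.mul_apply] at this
  rw [this, Matrix.one_apply]
end

section
/- Let K be a field, d ≥ 1, and R = K[x_1,…,x_d] the polynomial ring with homogeneous maximal ideal m = (x_1,…,x_d). Let G be a nontrivial finite group acting on R by K-algebra automorphisms that map the space [R]_1 of homogeneous linear forms into itself, and assume the induced action of G on [R]_1 is faithful. Then for every integer n ≥ 2, dim_K( R^G / (m^n ∩ R^G) ) < dim_K( R / m^n ) = C(n−1+d, d), where C(n−1+d,d) is the binomial coefficient and R^G denotes the invariant subring. -/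
open MvPolynomial

set_option synthInstance.maxHeartbeats 1000000
set_option maxHeartbeats 1000000

variable {K : Type} [Field K] {d : ℕ}

lemma deg_eq_sum (f : Fin d →₀ ℕ) : f.degree = ∑ i, f i :=
  Finset.sum_subset (Finset.subset_univ _)
    (fun i _ h => Finsupp.notMem_support_iff.mp h)

lemma deg_sum_eq (f : Fin d →₀ ℕ) : (f.sum fun _ k => k) = f.degree := rfl

lemma deg_add (f g : Fin d →₀ ℕ) : (f + g).degree = f.degree + g.degree := by
  simp [deg_eq_sum, Finset.sum_add_distrib]

lemma deg_single (i : Fin d) : (Finsupp.single i 1).degree = 1 := by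
  simp [deg_eq_sum, Finsupp.single_apply]

lemma deg_mono {f g : Fin d →₀ ℕ} (h : f ≤ g) : f.degree ≤ g.degree := by
  rw [deg_eq_sum, deg_eq_sum]
  exact Finset.sum_le_sum fun i _ => h i

lemma monomial_mem_pow (n : ℕ) (e : Fin d →₀ ℕ) (c : K) (h : n ≤ e.degree) :
    monomial e c ∈ (Ideal.span (Set.range (X : Fin d → MvPolynomial (Fin d) K))) ^ n := by
  induction n generalizing e with
  | zero => simp
  | succ n ih =>
    have he : e ≠ 0 := by
      rintro rfl
      simp [map_zero] at h
    obtain ⟨i, hi⟩ : ∃ i, e i ≠ 0 := by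
      by_contra hc; push_neg at hc; exact he (Finsupp.ext fun i => hc i)
    have hle : Finsupp.single i 1 ≤ e :=
      Finsupp.single_le_iff.mpr (Nat.one_le_iff_ne_zero.mpr hi)
    have hee : Finsupp.single i 1 + (e - Finsupp.single i 1) = e :=
      add_tsub_cancel_of_le hle
    have hdeg : n ≤ (e - Finsupp.single i 1).degree := by
      have := deg_add (Finsupp.single i 1) (e - Finsupp.single i 1)
      rw [hee, deg_single] at this
      omega
    have hmono : monomial e c = X i * monomial (e - Finsupp.single i 1) c := by
      rw [X, monomial_mul, one_mul, hee]
    rw [hmono, pow_succ']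
    exact Ideal.mul_mem_mul (Ideal.subset_span ⟨i, rfl⟩) (ih _ hdeg)

lemma mem_pow_span_X {n : ℕ} {p : MvPolynomial (Fin d) K} :
    p ∈ (Ideal.span (Set.range (X : Fin d → MvPolynomial (Fin d) K))) ^ n ↔
      ∀ e ∈ p.support, n ≤ e.degree := by
  set J : ℕ → Ideal (MvPolynomial (Fin d) K) := fun k =>
    Ideal.span ((fun e => monomial e (1 : K)) '' {e | k ≤ e.degree}) with hJ
  have hJmem : ∀ (k : ℕ) (q : MvPolynomial (Fin d) K),
      q ∈ J k ↔ ∀ e ∈ q.support, k ≤ e.degree := by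
    intro k q
    rw [hJ]
    rw [mem_ideal_span_monomial_image]
    constructor
    · intro h e he
      obtain ⟨si, hsi, hle⟩ := h e he
      exact le_trans hsi (deg_mono hle)
    · intro h e he
      exact ⟨e, h e he, le_rfl⟩
  have hle : ∀ k : ℕ,
      (Ideal.span (Set.range (X : Fin d → MvPolynomial (Fin d) K))) ^ k ≤ J k := by
    intro k
    induction k with
    | zero =>
      intro q _
      rw [hJmem]
      intro e _
      exact Nat.zero_le _
    | succ k ih =>
      rw [pow_succ]
      refine Ideal.mul_le.mpr fun r hr s hs => ?_
      have hr' := (hJmem k r).mp (ih hr)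
      have hs' : ∀ e ∈ s.support, 1 ≤ e.degree := by
        have : s ∈ J 1 := by
          refine Ideal.span_le.mpr ?_ hs
          rintro _ ⟨i, rfl⟩
          exact Ideal.subset_span ⟨Finsupp.single i 1, by simp [deg_single], by simp [X]⟩
        exact (hJmem 1 s).mp this
      rw [hJmem]
      intro e he
      classical
      obtain ⟨a, ha, b, hb, rfl⟩ := Finset.mem_add.mp (support_mul r s he)
      rw [deg_add]
      have := hr' a ha
      have := hs' b hb
      omega
  constructor
  · intro h
    exact (hJmem n p).mp (hle n h)
  · intro h
    rw [p.as_sum]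
    refine Submodule.sum_mem _ fun e he => ?_
    exact monomial_mem_pow n e _ (h e he)

lemma card_deg_le (d N : ℕ) :
    Nat.card {e : Fin d →₀ ℕ // e.degree ≤ N} = (N + d).choose d := by
  have E1 : {e : Fin d →₀ ℕ // e.degree ≤ N} ≃ {v : Fin d → ℕ // ∑ i, v i ≤ N} :=
    (Finsupp.equivFunOnFinite (α := Fin d) (M := ℕ)).subtypeEquiv fun e => by
      rw [deg_eq_sum]; rfl
  have E2 : {v : Fin d → ℕ // ∑ i, v i ≤ N} ≃ {w : Fin (d + 1) → ℕ // ∑ i, w i = N} := by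
    refine
      { toFun := fun v => ⟨Fin.snoc v.1 (N - ∑ i, v.1 i), ?_⟩
        invFun := fun w => ⟨fun i => w.1 (Fin.castSucc i), ?_⟩
        left_inv := ?_, right_inv := ?_ }
    · rw [Fin.sum_univ_castSucc]
      simp only [Fin.snoc_castSucc, Fin.snoc_last]
      exact Nat.add_sub_cancel' v.2
    · obtain ⟨w, hw⟩ := w
      rw [Fin.sum_univ_castSucc] at hw
      show (∑ i : Fin d, w (Fin.castSucc i)) ≤ N
      omega
    · rintro ⟨v, hv⟩
      ext i
      simp
    · rintro ⟨w, hw⟩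
      ext i
      rw [Fin.sum_univ_castSucc] at hw
      refine Fin.lastCases ?_ (fun j => ?_) i
      · simp only [Fin.snoc_last]
        show N - (∑ i : Fin d, w (Fin.castSucc i)) = w (Fin.last d)
        omega
      · simp
  have E3 : {w : Fin (d + 1) → ℕ // ∑ i, w i = N} ≃ {f : Fin (d + 1) →₀ ℕ // f.degree = N} :=
    ((Finsupp.equivFunOnFinite (α := Fin (d + 1)) (M := ℕ)).subtypeEquiv fun e => by
      rw [deg_eq_sum]; rfl).symm
  have key : ∀ s : Multiset (Fin (d + 1)),
      (Multiset.toFinsupp s).degree = Multiset.card s := by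
    intro s
    have h1 : ((Multiset.toFinsupp s).toMultiset).card =
        (Multiset.toFinsupp s).sum fun _ => id := Finsupp.card_toMultiset _
    rw [Multiset.toFinsupp_toMultiset] at h1
    rw [h1]
    rfl
  have E4 : {f : Fin (d + 1) →₀ ℕ // f.degree = N} ≃ Sym (Fin (d + 1)) N := by
    refine (Multiset.toFinsupp.toEquiv.subtypeEquiv fun s => ?_).symm
    show Multiset.card s = N ↔ (Multiset.toFinsupp s).degree = N
    rw [key s]
  have := Nat.card_congr (((E1.trans E2).trans E3).trans E4)
  rw [this, Nat.card_eq_fintype_card, Sym.card_sym_fin_eq_multichoose, Nat.multichoose_eq]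
  have h1 : d + 1 + N - 1 = N + d := by omega
  rw [h1, ← Nat.choose_symm (by omega : N ≤ N + d)]
  congr 1
  omega

lemma quot_equiv_exists (K : Type) [Field K] (d N : ℕ) :
    Nonempty ((restrictTotalDegree (Fin d) K N) ≃ₗ[K]
      (MvPolynomial (Fin d) K ⧸
        (Ideal.span (Set.range (X : Fin d → MvPolynomial (Fin d) K))) ^ (N + 1))) := by
  classical
  set I := (Ideal.span (Set.range (X : Fin d → MvPolynomial (Fin d) K))) ^ (N + 1) with hI
  set ψ : (restrictTotalDegree (Fin d) K N) →ₗ[K] (MvPolynomial (Fin d) K ⧸ I) :=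
    (Ideal.Quotient.mkₐ K I).toLinearMap.comp (Submodule.subtype _) with hψ
  have hinj : Function.Injective ψ := by
    rw [← LinearMap.ker_eq_bot, Submodule.eq_bot_iff]
    rintro ⟨p, hp⟩ hker
    have h0 : p ∈ I := by
      have hz : Ideal.Quotient.mk I p = 0 := hker
      exact Ideal.Quotient.eq_zero_iff_mem.mp hz
    have hsupp : p.support = ∅ := by
      refine Finset.eq_empty_of_forall_notMem fun e he => ?_
      have h1 := mem_pow_span_X.mp h0 e he
      have h2 : (e.sum fun _ k => k) ≤ p.totalDegree := le_totalDegree he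
      have h3 := (mem_restrictTotalDegree _ N p).mp hp
      rw [deg_sum_eq] at h2
      omega
    exact Subtype.ext (support_eq_empty.mp hsupp)
  have hsurj : Function.Surjective ψ := by
    intro q
    obtain ⟨p, rfl⟩ := Ideal.Quotient.mk_surjective q
    set p₁ : MvPolynomial (Fin d) K :=
      ∑ e ∈ p.support.filter (fun e => e.degree ≤ N), monomial e (coeff e p) with hp₁
    have hmem : p₁ ∈ restrictTotalDegree (Fin d) K N := by
      rw [mem_restrictTotalDegree]
      refine le_trans (totalDegree_finset_sum _ _) (Finset.sup_le fun e he => ?_)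
      refine le_trans (totalDegree_monomial_le _ _) ?_
      show e.degree ≤ N
      exact (Finset.mem_filter.mp he).2
    have hs := Finset.sum_filter_add_sum_filter_not p.support (fun e => e.degree ≤ N)
      (fun e => monomial e (coeff e p))
    rw [support_sum_monomial_coeff] at hs
    have hdiff : p₁ - p ∈ I := by
      have heq : p₁ - p =
          -(∑ e ∈ p.support.filter (fun e => ¬ e.degree ≤ N), monomial e (coeff e p)) := by
        linear_combination hs
      rw [heq]
      refine neg_mem (Submodule.sum_mem _ fun e he => ?_)
      have := (Finset.mem_filter.mp he).2
      exact monomial_mem_pow (N + 1) e _ (by omega)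
    refine ⟨⟨p₁, hmem⟩, ?_⟩
    show Ideal.Quotient.mk I p₁ = Ideal.Quotient.mk I p
    exact Ideal.Quotient.eq.mpr hdiff
  exact ⟨LinearEquiv.ofBijective ψ ⟨hinj, hsurj⟩⟩


/-- Let `K` be a field, `d ≥ 1`, `R = K[x_1,…,x_d]` with homogeneous maximal
ideal `m = (x_1,…,x_d)`.  Let `G` be a nontrivial finite group acting on `R` by `K`-algebra
automorphisms preserving the space of linear forms, the induced action on linear forms being
faithful.  Then for every `n ≥ 2`,
`dim_K (R^G / (m^n ∩ R^G)) < dim_K (R / m^n) = C(n-1+d, d)`. -/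
theorem invariant_ring_diff_power_dim_lt
    (K : Type) [Field K] (d : ℕ) (hd : 1 ≤ d)
    (G : Type) [Group G] [Finite G] [Nontrivial G]
    (ρ : G →* (MvPolynomial (Fin d) K ≃ₐ[K] MvPolynomial (Fin d) K))
    (hlinear : ∀ g : G, ∀ f ∈ homogeneousSubmodule (Fin d) K 1,
      ρ g f ∈ homogeneousSubmodule (Fin d) K 1)
    (hfaithful : ∀ g : G, (∀ f ∈ homogeneousSubmodule (Fin d) K 1, ρ g f = f) → g = 1)
    (S : Subalgebra K (MvPolynomial (Fin d) K))
    (hS : ∀ f : MvPolynomial (Fin d) K, f ∈ S ↔ ∀ g : G, ρ g f = f)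
    (m : Ideal (MvPolynomial (Fin d) K))
    (hm : m = Ideal.span (Set.range (X : Fin d → MvPolynomial (Fin d) K)))
    (n : ℕ) (hn : 2 ≤ n) :
    Module.finrank K (↥S ⧸ Ideal.comap S.val (m ^ n)) <
      Module.finrank K (MvPolynomial (Fin d) K ⧸ m ^ n) ∧
    Module.finrank K (MvPolynomial (Fin d) K ⧸ m ^ n) = Nat.choose (n - 1 + d) d := by
  classical
  subst hm
  obtain ⟨N, rfl⟩ : ∃ N, n = N + 1 := ⟨n - 1, by omega⟩
  have hN : 1 ≤ N := by omega
  set I : Ideal (MvPolynomial (Fin d) K) :=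
    (Ideal.span (Set.range (X : Fin d → MvPolynomial (Fin d) K))) ^ (N + 1) with hI
  obtain ⟨eqv⟩ := quot_equiv_exists K d N
  haveI hfinQ : Module.Finite K (MvPolynomial (Fin d) K ⧸ I) := Module.Finite.equiv eqv
  -- finrank of the quotient
  haveI hfint : Fintype {e : Fin d →₀ ℕ | (e.sum fun _ k => k) ≤ N} := by
    have hfin : {e : Fin d →₀ ℕ | e.degree ≤ N}.Finite := Finsupp.finite_of_degree_le N
    exact hfin.fintype
  have hrankQ : Module.finrank K (MvPolynomial (Fin d) K ⧸ I) = (N + d).choose d := by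
    rw [← eqv.finrank_eq]
    have hb : Module.finrank K (restrictTotalDegree (Fin d) K N) =
        Fintype.card {e : Fin d →₀ ℕ | (e.sum fun _ k => k) ≤ N} :=
      Module.finrank_eq_card_basis
        (basisRestrictSupport K {e : Fin d →₀ ℕ | (e.sum fun _ k => k) ≤ N})
    rw [hb, ← Nat.card_eq_fintype_card, ← card_deg_le d N]
    exact Nat.card_congr (Equiv.subtypeEquivRight fun e => Iff.rfl)
  refine ⟨?_, by simpa using hrankQ⟩
  -- the strict inequality
  set f₀ : ↥S →ₐ[K] MvPolynomial (Fin d) K ⧸ I :=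
    (Ideal.Quotient.mkₐ K I).comp S.val with hf₀
  have hker : ∀ a : ↥S, a ∈ Ideal.comap S.val I → f₀ a = 0 := fun a ha =>
    Ideal.Quotient.eq_zero_iff_mem.mpr ha
  set L : (↥S ⧸ Ideal.comap S.val I) →ₗ[K] MvPolynomial (Fin d) K ⧸ I :=
    (Ideal.Quotient.liftₐ (Ideal.comap S.val I) f₀ hker).toLinearMap with hL
  have hLmk : ∀ a : ↥S, L (Ideal.Quotient.mk (Ideal.comap S.val I) a) = f₀ a := by
    intro a
    have h : (Ideal.Quotient.liftₐ (Ideal.comap S.val I) f₀ hker)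
        (Ideal.Quotient.mk (Ideal.comap S.val I) a) = f₀ a := by
      rfl
    exact h
  have hLinj : Function.Injective L := by
    refine (injective_iff_map_eq_zero L).mpr fun x hx => ?_
    obtain ⟨a, rfl⟩ := Ideal.Quotient.mk_surjective x
    rw [hLmk] at hx
    exact Ideal.Quotient.eq_zero_iff_mem.mpr
      (Ideal.mem_comap.mpr (Ideal.Quotient.eq_zero_iff_mem.mp hx))
  have hrank : Module.finrank K (↥S ⧸ Ideal.comap S.val I) =
      Module.finrank K (LinearMap.range L) := (LinearMap.finrank_range_of_inj hLinj).symm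
  -- the range is not everything
  have hne : LinearMap.range L ≠ ⊤ := by
    intro htop
    obtain ⟨g, hg⟩ := exists_ne (1 : G)
    refine hg (hfaithful g fun f₁ hf₁ => ?_)
    have hsurj : ∃ a : ↥S, f₀ a = Ideal.Quotient.mk I f₁ := by
      have hmem : Ideal.Quotient.mk I f₁ ∈ LinearMap.range L := htop ▸ Submodule.mem_top
      obtain ⟨x, hx⟩ := hmem
      obtain ⟨a, rfl⟩ := Ideal.Quotient.mk_surjective x
      rw [hLmk] at hx
      exact ⟨a, hx⟩
    obtain ⟨a, ha⟩ := hsurj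
    have ha' : Ideal.Quotient.mk I (a : MvPolynomial (Fin d) K) = Ideal.Quotient.mk I f₁ := ha
    have hsub : (a : MvPolynomial (Fin d) K) - f₁ ∈ I := Ideal.Quotient.eq.mp ha'
    have hρa : ρ g (a : MvPolynomial (Fin d) K) = (a : MvPolynomial (Fin d) K) :=
      (hS _).mp a.2 g
    -- ρ g maps I into I
    have hom1_le : ∀ q : MvPolynomial (Fin d) K, q ∈ homogeneousSubmodule (Fin d) K 1 →
        q ∈ Ideal.span (Set.range (X : Fin d → MvPolynomial (Fin d) K)) := by
      intro q hq
      have : q ∈ (Ideal.span (Set.range (X : Fin d → MvPolynomial (Fin d) K))) ^ 1 := by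
        refine mem_pow_span_X.mpr fun e he => ?_
        have h2 : (Finsupp.weight 1) e = 1 :=
          ((mem_homogeneousSubmodule _ _).mp hq) (mem_support_iff.mp he)
        rw [Finsupp.degree_eq_weight_one]; exact h2.ge
      rwa [pow_one] at this
    have hmapI : ∀ p ∈ I, ρ g p ∈ I := by
      intro p hp
      set F : MvPolynomial (Fin d) K →+* MvPolynomial (Fin d) K := (ρ g).toAlgHom.toRingHom
        with hF
      have hXle : Ideal.map F (Ideal.span (Set.range (X : Fin d → MvPolynomial (Fin d) K))) ≤
          Ideal.span (Set.range (X : Fin d → MvPolynomial (Fin d) K)) := by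
        rw [Ideal.map_span]
        refine Ideal.span_le.mpr ?_
        rintro _ ⟨_, ⟨i, rfl⟩, rfl⟩
        exact hom1_le _ (hlinear g _ (isHomogeneous_X _ _))
      have h1 : ρ g p ∈ Ideal.map F I := Ideal.mem_map_of_mem F hp
      rw [hI, Ideal.map_pow] at h1
      exact Ideal.pow_right_mono hXle (N + 1) h1
    have hdiff : ρ g f₁ - f₁ ∈ I := by
      have h2 := I.sub_mem hsub (hmapI _ hsub)
      have h3 : ((a : MvPolynomial (Fin d) K) - f₁) -
          ρ g ((a : MvPolynomial (Fin d) K) - f₁) = ρ g f₁ - f₁ := by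
        rw [map_sub, hρa]; ring
      rwa [h3] at h2
    have hhom : ρ g f₁ - f₁ ∈ homogeneousSubmodule (Fin d) K 1 :=
      Submodule.sub_mem _ (hlinear g f₁ hf₁) hf₁
    have hz : ρ g f₁ - f₁ = 0 := by
      apply support_eq_empty.mp
      refine Finset.eq_empty_of_forall_notMem fun e he => ?_
      have h1 := mem_pow_span_X.mp hdiff e he
      have h2 : (Finsupp.weight 1) e = 1 :=
        ((mem_homogeneousSubmodule _ _).mp hhom) (mem_support_iff.mp he)
      rw [Finsupp.degree_eq_weight_one] at h1
      have h1' : N + 1 ≤ (Finsupp.weight 1) e := h1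
      rw [h2] at h1'
      omega
    exact sub_eq_zero.mp hz
  rw [hrank]
  exact Submodule.finrank_lt hne
end
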